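/- Let $\mu$ be a non-negative Radon measure on $\mathbb{R}^N$, let $0 < r < s$, and suppose there exist constants $C, \alpha, m > 0$ such that for all $0 < a < b \le s$, $e^{Cb^{\alpha}} \frac{\mu(B_b)}{b^m} - e^{Ca^{\alpha}} \frac{\mu(B_a)}{a^m} \ge 0$ (almost monotonicity of the density ratio). Then $\int_{B_s \setminus B_r} \frac{1}{|x|^m}\, d\mu(x) \le C' \left( 1 + \ln\frac{s}{r} \right) \frac{\mu(B_s)}{s^m}$ for a constant $C'$ depending only on $C, \alpha, m$ and $s \le 1$. -/

import Mathlib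

open MeasureTheory Metric Set

/-- Let `μ` be a non-negative Radon measure on `ℝ^N`, `0 < r < s ≤ 1`,
and suppose the almost-monotonicity `e^{Cb^α} μ(B_b)/b^m ≥ e^{Ca^α} μ(B_a)/a^m` holds for
all `0 < a < b ≤ s`.  Then
`∫_{B_s \ B_r} |x|^{-m} dμ ≤ C' (1 + ln(s/r)) μ(B_s)/s^m`
for a constant `C'` depending only on `C`, `α`, `m`. -/
theorem stmt15 (C α : ℝ) (m : ℕ) (hC : 0 < C) (hα : 0 < α) (hm : 0 < m) :
    ∃ C' > (0 : ℝ), ∀ (N : ℕ) (μ : Measure (EuclideanSpace ℝ (Fin N)))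
      [IsFiniteMeasureOnCompacts μ] [μ.Regular],
      ∀ r s : ℝ, 0 < r → r < s → s ≤ 1 →
      (∀ a b : ℝ, 0 < a → a < b → b ≤ s →
        Real.exp (C * a ^ α) * (μ (ball (0 : EuclideanSpace ℝ (Fin N)) a)).toReal / a ^ m
          ≤ Real.exp (C * b ^ α) *
              (μ (ball (0 : EuclideanSpace ℝ (Fin N)) b)).toReal / b ^ m) →
      ∫ x in ball (0 : EuclideanSpace ℝ (Fin N)) s \ ball 0 r, 1 / ‖x‖ ^ m ∂μ
        ≤ C' * (1 + Real.log (s / r)) *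
            (μ (ball (0 : EuclideanSpace ℝ (Fin N)) s)).toReal / s ^ m := by
  refine ⟨2 ^ (m + 1) * Real.exp C, by positivity, ?_⟩
  intro N μ _ _ r s hr hrs hs1 hmono
  have hs : 0 < s := hr.trans hrs
  set E := EuclideanSpace ℝ (Fin N)
  set f : E → ℝ := fun x => 1 / ‖x‖ ^ m with hf
  have hfmeas : Measurable f := by
    apply Measurable.div measurable_const
    exact (measurable_norm.pow_const m)
  -- integrability on annuli
  have hInt : ∀ t b : ℝ, 0 < t → IntegrableOn f (ball (0 : E) b \ ball 0 t) μ := by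
    intro t b ht
    have hmeasset : MeasurableSet (ball (0 : E) b \ ball 0 t) :=
      measurableSet_ball.diff measurableSet_ball
    refine Integrable.mono' (g := fun _ => 1 / t ^ m)
      ((integrableOn_const_iff (C := 1 / t ^ m) enorm_ne_top).mpr (Or.inr ?_)) hfmeas.aestronglyMeasurable.restrict ?_
    · exact (measure_mono diff_subset).trans_lt measure_ball_lt_top
    · filter_upwards [ae_restrict_mem hmeasset] with x hx
      have hx2 : t ≤ ‖x‖ := by
        have := hx.2
        simpa [mem_ball, dist_zero_right, not_lt] using this
      have : f x ≤ 1 / t ^ m := by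
        apply one_div_le_one_div_of_le (pow_pos ht m)
        exact pow_le_pow_left₀ ht.le hx2 m
      have hfx : 0 ≤ f x := by positivity
      rwa [Real.norm_of_nonneg hfx]
  -- density ratio bound
  have hμs : 0 ≤ (μ (ball (0 : E) s)).toReal := ENNReal.toReal_nonneg
  have hK : ∀ b : ℝ, 0 < b → b ≤ s →
      (μ (ball (0 : E) b)).toReal / b ^ m
        ≤ Real.exp C * (μ (ball (0 : E) s)).toReal / s ^ m := by
    intro b hb hbs
    rcases eq_or_lt_of_le hbs with rfl | hlt
    · have h1 : (1:ℝ) ≤ Real.exp C := by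
        rw [Real.one_le_exp_iff]; exact hC.le
      have : (μ (ball (0 : E) b)).toReal / b ^ m ≤
          Real.exp C * ((μ (ball (0 : E) b)).toReal / b ^ m) := by
        nlinarith [ENNReal.toReal_nonneg (a := μ (ball (0 : E) b)), pow_pos hb m,
          div_nonneg (ENNReal.toReal_nonneg (a := μ (ball (0 : E) b))) (pow_pos hb m).le]
      linarith [this, (mul_div_assoc (Real.exp C) (μ (ball (0 : E) b)).toReal (b ^ m)).symm]
    · have h := hmono b s hb hlt le_rfl
      have hba : (0:ℝ) < Real.exp (C * b ^ α) := Real.exp_pos _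
      have hfac : Real.exp (C * s ^ α) / Real.exp (C * b ^ α) ≤ Real.exp C := by
        rw [← Real.exp_sub]
        apply Real.exp_le_exp.mpr
        have hsα : s ^ α ≤ 1 := Real.rpow_le_one hs.le hs1 hα.le
        have hbα : 0 < b ^ α := Real.rpow_pos_of_pos hb α
        nlinarith
      have h2 : (μ (ball (0 : E) b)).toReal / b ^ m ≤
          (Real.exp (C * s ^ α) / Real.exp (C * b ^ α)) *
            ((μ (ball (0 : E) s)).toReal / s ^ m) := by
        rw [div_mul_eq_mul_div, le_div_iff₀ hba]
        calc (μ (ball (0 : E) b)).toReal / b ^ m * Real.exp (C * b ^ α)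
            = Real.exp (C * b ^ α) * (μ (ball (0 : E) b)).toReal / b ^ m := by ring
          _ ≤ Real.exp (C * s ^ α) * (μ (ball (0 : E) s)).toReal / s ^ m := h
          _ = Real.exp (C * s ^ α) * ((μ (ball (0 : E) s)).toReal / s ^ m) := by ring
      have h3 : (Real.exp (C * s ^ α) / Real.exp (C * b ^ α)) *
            ((μ (ball (0 : E) s)).toReal / s ^ m) ≤
          Real.exp C * ((μ (ball (0 : E) s)).toReal / s ^ m) := by
        apply mul_le_mul_of_nonneg_right hfac
        positivity
      calc (μ (ball (0 : E) b)).toReal / b ^ m ≤ _ := h2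
        _ ≤ Real.exp C * ((μ (ball (0 : E) s)).toReal / s ^ m) := h3
        _ = Real.exp C * (μ (ball (0 : E) s)).toReal / s ^ m := by ring
  set A : ℝ := 2 ^ m * Real.exp C * (μ (ball (0 : E) s)).toReal / s ^ m with hA
  have hA0 : 0 ≤ A := by positivity
  -- annulus bound
  have hann : ∀ b : ℝ, 0 < b → b ≤ s →
      ∫ x in ball (0 : E) b \ ball 0 (b / 2), f x ∂μ ≤ A := by
    intro b hb hbs
    have hb2 : (0:ℝ) < b / 2 := by linarith
    have hmeasset : MeasurableSet (ball (0 : E) b \ ball 0 (b / 2)) :=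
      measurableSet_ball.diff measurableSet_ball
    have hμfin : μ (ball (0 : E) b \ ball 0 (b / 2)) < ⊤ :=
      (measure_mono diff_subset).trans_lt measure_ball_lt_top
    have h1 : ∫ x in ball (0 : E) b \ ball 0 (b / 2), f x ∂μ ≤
        ∫ _x in ball (0 : E) b \ ball 0 (b / 2), (1 / (b / 2) ^ m) ∂μ := by
      apply setIntegral_mono_on (hInt _ _ hb2) ((integrableOn_const_iff (C := 1 / (b / 2) ^ m) enorm_ne_top).mpr (Or.inr hμfin)) hmeasset
      intro x hx
      have hx2 : b / 2 ≤ ‖x‖ := by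
        have := hx.2
        simpa [mem_ball, dist_zero_right, not_lt] using this
      apply one_div_le_one_div_of_le (by positivity)
      exact pow_le_pow_left₀ hb2.le hx2 m
    rw [setIntegral_const, smul_eq_mul] at h1
    have h2 : (μ (ball (0 : E) b \ ball 0 (b / 2))).toReal * (1 / (b / 2) ^ m) ≤
        (μ (ball (0 : E) b)).toReal * (1 / (b / 2) ^ m) := by
      apply mul_le_mul_of_nonneg_right _ (by positivity)
      exact ENNReal.toReal_mono measure_ball_lt_top.ne (measure_mono diff_subset)
    have h3 : (μ (ball (0 : E) b)).toReal * (1 / (b / 2) ^ m) =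
        (μ (ball (0 : E) b)).toReal / b ^ m * 2 ^ m := by
      rw [div_pow]
      field_simp
    have h4 := hK b hb hbs
    have h5 : (μ (ball (0 : E) b)).toReal / b ^ m * 2 ^ m ≤
        Real.exp C * (μ (ball (0 : E) s)).toReal / s ^ m * 2 ^ m := by
      apply mul_le_mul_of_nonneg_right h4 (by positivity)
    rw [hA]
    calc ∫ x in ball (0 : E) b \ ball 0 (b / 2), f x ∂μ ≤ _ := h1
      _ ≤ (μ (ball (0 : E) b)).toReal * (1 / (b / 2) ^ m) := h2
      _ = (μ (ball (0 : E) b)).toReal / b ^ m * 2 ^ m := h3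
      _ ≤ Real.exp C * (μ (ball (0 : E) s)).toReal / s ^ m * 2 ^ m := h5
      _ = 2 ^ m * Real.exp C * (μ (ball (0 : E) s)).toReal / s ^ m := by ring
  -- iteration
  have hIter : ∀ n : ℕ,
      ∫ x in ball (0 : E) s \ ball 0 (s / 2 ^ n), f x ∂μ ≤ n * A := by
    intro n
    induction n with
    | zero => simp
    | succ n ih =>
      have h2n : (0:ℝ) < 2 ^ n := by positivity
      have hsub1 : s / 2 ^ (n + 1) ≤ s / 2 ^ n := by
        apply div_le_div_of_nonneg_left hs.le h2n
        rw [pow_succ]; nlinarith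
      have hsub2 : s / 2 ^ n ≤ s := by
        apply div_le_self hs.le
        exact one_le_pow₀ one_le_two
      have hsplit : ball (0 : E) s \ ball 0 (s / 2 ^ (n + 1)) =
          (ball (0 : E) s \ ball 0 (s / 2 ^ n)) ∪
            (ball (0 : E) (s / 2 ^ n) \ ball 0 (s / 2 ^ (n + 1))) := by
        rw [Set.diff_union_diff_cancel (ball_subset_ball hsub2) (ball_subset_ball hsub1)]
      have hdisj : Disjoint (ball (0 : E) s \ ball 0 (s / 2 ^ n))
          (ball (0 : E) (s / 2 ^ n) \ ball 0 (s / 2 ^ (n + 1))) := by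
        rw [Set.disjoint_left]
        intro x hx1 hx2
        exact hx1.2 hx2.1
      have hm2 : MeasurableSet (ball (0 : E) (s / 2 ^ n) \ ball 0 (s / 2 ^ (n + 1))) :=
        measurableSet_ball.diff measurableSet_ball
      have heq : s / 2 ^ (n + 1) = (s / 2 ^ n) / 2 := by
        rw [pow_succ]; ring
      have hannb := hann (s / 2 ^ n) (by positivity) hsub2
      rw [← heq] at hannb
      rw [hsplit, setIntegral_union hdisj hm2 (hInt _ _ (by positivity)) (hInt _ _ (by positivity))]
      push_cast
      linarith
  -- choose n
  have hsr1 : 1 < s / r := (one_lt_div hr).mpr hrs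
  have hlog0 : 0 ≤ Real.log (s / r) := Real.log_nonneg hsr1.le
  set n : ℕ := ⌈Real.logb 2 (s / r)⌉₊ with hn
  have hlogb : Real.logb 2 (s / r) ≤ n := Nat.le_ceil _
  have h2pow : s / r ≤ 2 ^ n := by
    have := (Real.logb_le_iff_le_rpow one_lt_two (by positivity : (0:ℝ) < s / r)).mp hlogb
    rwa [Real.rpow_natCast] at this
  have hrn : s / 2 ^ n ≤ r := by
    rw [div_le_iff₀ (by positivity)]
    rw [div_le_iff₀ hr] at h2pow
    linarith
  have hnle : (n : ℝ) ≤ 2 * (1 + Real.log (s / r)) := by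
    have hceil : (n : ℝ) < Real.logb 2 (s / r) + 1 := Nat.ceil_lt_add_one (by
      apply Real.logb_nonneg one_lt_two hsr1.le)
    have hlog2 : (0.6931471803 : ℝ) < Real.log 2 := Real.log_two_gt_d9
    have : Real.logb 2 (s / r) ≤ 2 * Real.log (s / r) := by
      rw [Real.logb, div_le_iff₀ (by linarith)]
      nlinarith
    linarith
  -- conclude
  have hmono_set : ∫ x in ball (0 : E) s \ ball 0 r, f x ∂μ ≤
      ∫ x in ball (0 : E) s \ ball 0 (s / 2 ^ n), f x ∂μ := by
    apply setIntegral_mono_set (hInt _ _ (by positivity))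
    · filter_upwards with x
      have : 0 ≤ f x := by positivity
      exact this
    · exact HasSubset.Subset.eventuallyLE (diff_subset_diff_right (ball_subset_ball hrn))
  have hfinal : (n : ℝ) * A ≤ 2 ^ (m + 1) * Real.exp C * (1 + Real.log (s / r)) *
      (μ (ball (0 : E) s)).toReal / s ^ m := by
    have h1 : (n : ℝ) * A ≤ 2 * (1 + Real.log (s / r)) * A :=
      mul_le_mul_of_nonneg_right hnle hA0
    have h2 : 2 * (1 + Real.log (s / r)) * A =
        2 ^ (m + 1) * Real.exp C * (1 + Real.log (s / r)) *
          (μ (ball (0 : E) s)).toReal / s ^ m := by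
      rw [hA, pow_succ]; ring
    linarith
  calc ∫ x in ball (0 : E) s \ ball 0 r, f x ∂μ ≤ _ := hmono_set
    _ ≤ n * A := hIter n
    _ ≤ _ := hfinal
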